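/- Let q be a prime, G = (Z/qZ)*, a ≠ 1 in G, 𝒫 = 𝒫(G,a) = [G : H(a)]. Let 𝔐 be a multiset in G with no sub-multiset product equal to a, and suppose the subgroup H generated by the high-multiplicity (≥ q−2) elements equals H(a). Then the multiset 𝔎 of elements of 𝔐 not in H(a) satisfies |𝔎| ≤ 𝒫 − 2. -/

import Mathlib

open scoped Classical

private lemma aux_exists_of_le_map {α β : Type*} {f : α → β} {t : Multiset α} :
    ∀ {s : Multiset β}, s ≤ t.map f → ∃ u, u ≤ t ∧ u.map f = s := by
  induction t using Multiset.induction_on with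
  | empty =>
    intro s hs
    simp only [Multiset.map_zero, Multiset.le_zero] at hs
    exact ⟨0, le_refl _, by simp [hs]⟩
  | cons a t ih =>
    intro s hs
    rw [Multiset.map_cons] at hs
    by_cases h : f a ∈ s
    · obtain ⟨u, hu, hmap⟩ := ih (Multiset.erase_le_iff_le_cons.mpr hs)
      exact ⟨a ::ₘ u, Multiset.cons_le_cons _ hu, by
        rw [Multiset.map_cons, hmap, Multiset.cons_erase h]⟩
    · obtain ⟨u, hu, hmap⟩ := ih ((Multiset.le_cons_of_notMem h).mp hs)
      exact ⟨u, le_trans hu (Multiset.le_cons_self _ _), hmap⟩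

/-- Core growth lemma: for a multiset of non-identity elements, either the target `t`
(which lies in every nontrivial cyclic subgroup) is a sub-multiset product, or the
set of sub-multiset products has size at least `card + 1`. -/
private lemma aux_core {Q : Type*} [CommGroup Q] [Finite Q] (t : Q)
    (ht : ∀ x : Q, x ≠ 1 → t ∈ Subgroup.zpowers x) :
    ∀ T : Multiset Q, (∀ x ∈ T, x ≠ (1 : Q)) →
      (∃ S ≤ T, S.prod = t) ∨ T.card + 1 ≤ {g : Q | ∃ S ≤ T, S.prod = g}.ncard := by
  intro T
  induction T using Multiset.induction_on with
  | empty =>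
    intro _
    right
    simp only [Multiset.card_zero, zero_add]
    exact (Set.ncard_pos (Set.toFinite _)).mpr ⟨1, 0, zero_le, Multiset.prod_zero⟩
  | cons x T ih =>
    intro hT
    have hx1 : x ≠ 1 := hT x (Multiset.mem_cons_self _ _)
    have hsub : {g : Q | ∃ S ≤ T, S.prod = g} ⊆ {g : Q | ∃ S ≤ x ::ₘ T, S.prod = g} := by
      rintro g ⟨S, hS, hp⟩
      exact ⟨S, le_trans hS (Multiset.le_cons_self _ _), hp⟩
    rcases ih (fun y hy => hT y (Multiset.mem_cons_of_mem hy)) with h | h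
    · obtain ⟨S, hS, hp⟩ := h
      exact Or.inl ⟨S, le_trans hS (Multiset.le_cons_self _ _), hp⟩
    · by_cases hstab : ∀ s ∈ {g : Q | ∃ S ≤ T, S.prod = g}, x * s ∈ {g : Q | ∃ S ≤ T, S.prod = g}
      · left
        have hpow : ∀ n : ℕ, x ^ n ∈ {g : Q | ∃ S ≤ T, S.prod = g} := by
          intro n
          induction n with
          | zero => exact ⟨0, zero_le, by simp⟩
          | succ n ihn => rw [pow_succ'] ; exact hstab _ ihn
        obtain ⟨k, hk0⟩ := ht x hx1
        have hk : x ^ k = t := hk0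
        have hord : (0 : ℤ) < (orderOf x : ℤ) := by
          exact_mod_cast (orderOf_pos x)
        have hmod : x ^ ((k % (orderOf x : ℤ)).toNat) = t := by
          rw [← zpow_natCast, Int.toNat_of_nonneg (Int.emod_nonneg k hord.ne'),
            zpow_mod_orderOf, hk]
        obtain ⟨S, hS, hp⟩ := hpow ((k % (orderOf x : ℤ)).toNat)
        exact ⟨S, le_trans hS (Multiset.le_cons_self _ _), by rw [hp, hmod]⟩
      · right
        push_neg at hstab
        obtain ⟨s, hsmem, hxs⟩ := hstab
        obtain ⟨S, hS, hp⟩ := hsmem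
        have hins : insert (x * s) {g : Q | ∃ S ≤ T, S.prod = g}
            ⊆ {g : Q | ∃ S ≤ x ::ₘ T, S.prod = g} := by
          apply Set.insert_subset _ hsub
          exact ⟨x ::ₘ S, Multiset.cons_le_cons _ hS, by rw [Multiset.prod_cons, hp]⟩
        calc (x ::ₘ T).card + 1 = (T.card + 1) + 1 := by rw [Multiset.card_cons]
          _ ≤ {g : Q | ∃ S ≤ T, S.prod = g}.ncard + 1 := by omega
          _ = (insert (x * s) {g : Q | ∃ S ≤ T, S.prod = g}).ncard := by
              rw [Set.ncard_insert_of_notMem hxs (Set.toFinite _)]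
          _ ≤ _ := Set.ncard_le_ncard hins (Set.toFinite _)

/-- Lifting lemma: every element of the subgroup generated by a finite set of elements
of finite order with high multiplicity in `F` is a product of a sub-multiset of `F`. -/
private lemma aux_lift {G : Type*} [CommGroup G] [DecidableEq G] (F : Multiset G) :
    ∀ Y : Finset G, (∀ y ∈ Y, orderOf y ≠ 0 ∧ orderOf y - 1 ≤ F.count y) →
      ∀ g ∈ Subgroup.closure (Y : Set G), ∃ R, R ≤ F ∧ R.prod = g ∧ ∀ x ∈ R, x ∈ Y := by
  intro Y
  induction Y using Finset.induction_on with
  | empty =>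
    intro _ g hg
    rw [Finset.coe_empty, Subgroup.closure_empty, Subgroup.mem_bot] at hg
    exact ⟨0, zero_le, by simp [hg], by simp⟩
  | @insert y Y hyY ih =>
    intro hY g hg
    rw [Finset.coe_insert, Set.insert_eq, Subgroup.closure_union,
      ← Subgroup.zpowers_eq_closure] at hg
    obtain ⟨u, hu, v, hv, rfl⟩ := Subgroup.mem_sup.mp hg
    obtain ⟨k, hk0⟩ := hu
    have hk : y ^ k = u := hk0
    obtain ⟨hyord, hycount⟩ := hY y (Finset.mem_insert_self _ _)
    have hord : (0 : ℤ) < (orderOf y : ℤ) := by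
      exact_mod_cast Nat.pos_of_ne_zero hyord
    set e : ℕ := (k % (orderOf y : ℤ)).toNat with he
    have hye : y ^ e = u := by
      rw [← zpow_natCast, Int.toNat_of_nonneg (Int.emod_nonneg k hord.ne'),
        zpow_mod_orderOf, hk]
    have helt : e ≤ orderOf y - 1 := by
      have h1 : k % (orderOf y : ℤ) < (orderOf y : ℤ) := Int.emod_lt_of_pos k hord
      have h0 : (0 : ℤ) ≤ k % (orderOf y : ℤ) := Int.emod_nonneg k hord.ne'
      rw [he]
      omega
    obtain ⟨R', hR'F, hR'prod, hR'mem⟩ := ih (fun z hz => hY z (Finset.mem_insert_of_mem hz)) v hv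
    refine ⟨Multiset.replicate e y + R', ?_, ?_, ?_⟩
    · rw [Multiset.le_iff_count]
      intro x
      by_cases hxy : x = y
      · subst hxy
        have h0 : Multiset.count x R' = 0 :=
          Multiset.count_eq_zero.mpr (fun hmem => hyY (hR'mem x hmem))
        rw [Multiset.count_add, Multiset.count_replicate_self, h0, add_zero]
        omega
      · have h0 : Multiset.count x (Multiset.replicate e y) = 0 := by
          rw [Multiset.count_replicate]; exact if_neg (fun h => hxy h.symm)
        rw [Multiset.count_add, h0, zero_add]
        exact Multiset.le_iff_count.mp hR'F x
    · rw [Multiset.prod_add, Multiset.prod_replicate, hye, hR'prod]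
    · intro x hx
      rcases Multiset.mem_add.mp hx with hx | hx
      · rw [Multiset.eq_of_mem_replicate hx]; exact Finset.mem_insert_self _ _
      · exact Finset.mem_insert_of_mem (hR'mem x hx)

private lemma aux_prod_mk {G : Type*} [CommGroup G] (H : Subgroup G) (S : Multiset G) :
    (S.map ⇑(QuotientGroup.mk' H)).prod = (QuotientGroup.mk' H) S.prod :=
  Multiset.prod_hom S (QuotientGroup.mk' H)

/-- If the subgroup generated by the high-multiplicity (≥ q−2) elements of a
product-avoiding multiset 𝔐 equals H(a), then the multiset 𝔎 of elements of 𝔐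
outside H(a) has cardinality at most 𝒫 − 2, where 𝒫 = [G : H(a)]. -/
theorem stmt_12 (q : ℕ) (hq : q.Prime) (a : (ZMod q)ˣ) (ha : a ≠ 1)
    (M : Multiset (ZMod q)ˣ) (havoid : ∀ S ≤ M, S.prod ≠ a)
    (Ha : Subgroup (ZMod q)ˣ) (haHa : a ∉ Ha)
    (hmax : ∀ K : Subgroup (ZMod q)ˣ, a ∉ K → Nat.card K ≤ Nat.card Ha)
    (hH : Subgroup.closure {y : (ZMod q)ˣ | q - 2 ≤ M.count y} = Ha) :
    (M.filter (fun x => x ∉ Ha)).card ≤ Ha.index - 2 := by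
  haveI : Fact q.Prime := ⟨hq⟩
  haveI : NeZero q := ⟨hq.pos.ne'⟩
  have hcardG : Fintype.card (ZMod q)ˣ = q - 1 := by
    rw [ZMod.card_units_eq_totient, Nat.totient_prime hq]
  by_contra hcon
  push_neg at hcon
  set T : Multiset ((ZMod q)ˣ ⧸ Ha) := (M.filter (fun x => x ∉ Ha)).map ⇑(QuotientGroup.mk' Ha) with hTdef
  have hT1 : ∀ z ∈ T, z ≠ 1 := by
    intro z hz h1
    obtain ⟨x, hxmem, rfl⟩ := Multiset.mem_map.mp hz
    exact (Multiset.of_mem_filter hxmem) ((QuotientGroup.eq_one_iff x).mp h1)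
  have htmem : ∀ x : (ZMod q)ˣ ⧸ Ha, x ≠ 1 → (QuotientGroup.mk' Ha) a ∈ Subgroup.zpowers x := by
    intro x hx
    obtain ⟨g, rfl⟩ := QuotientGroup.mk'_surjective Ha x
    have hgHa : g ∉ Ha := fun h => hx ((QuotientGroup.eq_one_iff g).mpr h)
    have hsub : (Ha : Set (ZMod q)ˣ) ⊆ ((Subgroup.zpowers ((QuotientGroup.mk' Ha) g)).comap (QuotientGroup.mk' Ha) : Set _) := by
      intro h hh
      simp only [SetLike.mem_coe, Subgroup.mem_comap] at hh ⊢
      have h1 : (QuotientGroup.mk' Ha) h = 1 := (QuotientGroup.eq_one_iff h).mpr hh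
      rw [h1]; exact Subgroup.one_mem _
    have hgK : g ∈ (Subgroup.zpowers ((QuotientGroup.mk' Ha) g)).comap (QuotientGroup.mk' Ha) :=
      Subgroup.mem_comap.mpr (Subgroup.mem_zpowers _)
    have hc1 : Nat.card Ha = (Ha : Set (ZMod q)ˣ).ncard := Nat.card_coe_set_eq _
    have hc2 : Nat.card ((Subgroup.zpowers ((QuotientGroup.mk' Ha) g)).comap (QuotientGroup.mk' Ha))
        = (((Subgroup.zpowers ((QuotientGroup.mk' Ha) g)).comap (QuotientGroup.mk' Ha) : Subgroup (ZMod q)ˣ) : Set (ZMod q)ˣ).ncard :=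
      Nat.card_coe_set_eq _
    have hlt : Nat.card Ha < Nat.card ((Subgroup.zpowers ((QuotientGroup.mk' Ha) g)).comap (QuotientGroup.mk' Ha)) := by
      rw [hc1, hc2]
      exact Set.ncard_lt_ncard ⟨hsub, fun hsub2 => hgHa (hsub2 hgK)⟩ (Set.toFinite _)
    have haK : a ∈ (Subgroup.zpowers ((QuotientGroup.mk' Ha) g)).comap (QuotientGroup.mk' Ha) := by
      by_contra hak
      exact absurd (hmax _ hak) (not_le.mpr hlt)
    exact Subgroup.mem_comap.mp haK
  have hindex : Ha.index = Nat.card ((ZMod q)ˣ ⧸ Ha) := Subgroup.index_eq_card Ha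
  have hcardT : T.card = (M.filter (fun x => x ∉ Ha)).card := by
    rw [hTdef, Multiset.card_map]
  obtain ⟨Sb, hSb, hSbprod⟩ : ∃ S ≤ T, S.prod = (QuotientGroup.mk' Ha) a := by
    rcases aux_core ((QuotientGroup.mk' Ha) a) htmem T hT1 with h | h
    · exact h
    · have huniv : {g : (ZMod q)ˣ ⧸ Ha | ∃ S ≤ T, S.prod = g} = Set.univ := by
        apply Set.eq_of_subset_of_ncard_le (Set.subset_univ _)
        rw [Set.ncard_univ]
        omega
      have : (QuotientGroup.mk' Ha) a ∈ {g : (ZMod q)ˣ ⧸ Ha | ∃ S ≤ T, S.prod = g} := huniv ▸ Set.mem_univ _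
      exact this
  rw [hTdef] at hSb
  obtain ⟨S, hSle, rfl⟩ := aux_exists_of_le_map hSb
  have hπa : (QuotientGroup.mk' Ha) S.prod = (QuotientGroup.mk' Ha) a :=
    (aux_prod_mk Ha S).symm.trans hSbprod
  obtain ⟨z, hzHa, hz⟩ := (QuotientGroup.mk'_eq_mk' Ha).mp hπa
  have hfin : {y : (ZMod q)ˣ | q - 2 ≤ M.count y}.Finite := Set.toFinite _
  have hYcond : ∀ y ∈ hfin.toFinset,
      orderOf y ≠ 0 ∧ orderOf y - 1 ≤ (M.filter (fun x => ¬ x ∉ Ha)).count y := by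
    intro y hy
    rw [Set.Finite.mem_toFinset] at hy
    have hy' : q - 2 ≤ M.count y := hy
    have hyHa : y ∈ Ha := by rw [← hH]; exact Subgroup.subset_closure hy
    refine ⟨(orderOf_pos y).ne', ?_⟩
    have hord : orderOf y ≤ q - 1 := by
      rw [← hcardG]; exact orderOf_le_card_univ
    have hcount : (M.filter (fun x => ¬ x ∉ Ha)).count y = M.count y := by
      rw [Multiset.count_filter, if_pos (not_not.mpr hyHa)]
    omega
  have hzY : z ∈ Subgroup.closure (↑hfin.toFinset : Set (ZMod q)ˣ) := by
    rw [Set.Finite.coe_toFinset, hH]; exact hzHa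
  obtain ⟨R, hRF, hRprod, -⟩ :=
    aux_lift (M.filter (fun x => ¬ x ∉ Ha)) hfin.toFinset hYcond z hzY
  have hle : S + R ≤ M := by
    calc S + R ≤ M.filter (fun x => x ∉ Ha) + M.filter (fun x => ¬ x ∉ Ha) :=
          add_le_add hSle hRF
      _ = M := Multiset.filter_add_not _ M
  exact havoid (S + R) hle (by rw [Multiset.prod_add, hRprod, hz])
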